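/- The elementary phase E_el with parameter w, |w| < 1, and distinct indices s ≠ t, defined by E_el(X) = (ℓ(X)/(2π))I + w·(1/(2π))∫_X e^{i(s−t)x}dx |s⟩⟨t| + \bar{w}·(1/(2π))∫_X e^{i(t−s)x}dx |t⟩⟨s|, satisfies ‖E_el(X)‖ < 1 whenever E_el(X) ≠ I; indeed ‖E_el(X)‖ = ℓ(X)/(2π) + |w|·|(1/(2π))∫_X e^{i(s−t)x}dx|. -/

import Mathlib

open MeasureTheory Complex

/-- `phaseInt X n m = (1/2π) ∫_X e^{i(n-m)x} dx`. -/
noncomputable def phaseInt (X : Set ℝ) (n m : ℕ) : ℂ :=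
  ((1 / (2 * Real.pi) : ℝ) : ℂ) *
    ∫ x in X, Complex.exp (Complex.I * ((n : ℂ) - (m : ℂ)) * (x : ℂ))

lemma norm_f (n m : ℕ) (x : ℝ) : ‖Complex.exp (Complex.I * ((n:ℂ)-(m:ℂ)) * (x:ℂ))‖ = 1 := by
  rw [Complex.norm_exp]
  have : (Complex.I * ((n:ℂ)-(m:ℂ)) * (x:ℂ)).re = 0 := by
    simp [Complex.mul_re, Complex.mul_im]
  rw [this, Real.exp_zero]

lemma int_f (n m : ℕ) (X : Set ℝ) (hfin : volume X < ⊤) :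
    IntegrableOn (fun x : ℝ => Complex.exp (Complex.I * ((n:ℂ)-(m:ℂ)) * (x:ℂ))) X volume := by
  apply Integrable.mono' (g := fun _ => (1:ℝ)) (integrableOn_const hfin.ne)
  · exact (Continuous.cexp (continuous_const.mul Complex.continuous_ofReal)).aestronglyMeasurable
  · filter_upwards with x; rw [norm_f]

lemma full_int (s t : ℕ) (hst : s ≠ t) :
    ∫ x in Set.Ico 0 (2 * Real.pi), Complex.exp (Complex.I * ((s:ℂ)-(t:ℂ)) * (x:ℂ)) = 0 := by
  have hk : Complex.I * ((s:ℂ)-(t:ℂ)) ≠ 0 := by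
    have : ((s:ℂ)) ≠ (t:ℂ) := by exact_mod_cast hst
    simp [sub_ne_zero, this, Complex.I_ne_zero]
  have h2 : (0:ℝ) ≤ 2 * Real.pi := by positivity
  rw [MeasureTheory.integral_Ico_eq_integral_Ioo,
    ← MeasureTheory.integral_Ioc_eq_integral_Ioo, ← intervalIntegral.integral_of_le h2]
  rw [integral_exp_mul_complex hk]
  have h1 : Complex.exp (Complex.I * ((s:ℂ)-(t:ℂ)) * ((2*Real.pi : ℝ):ℂ)) = 1 := by
    have := Complex.exp_int_mul_two_pi_mul_I ((s:ℤ) - (t:ℤ))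
    rw [← this]; ring_nf; push_cast; ring_nf
  rw [h1]
  simp

lemma phaseInt_conj (X : Set ℝ) (s t : ℕ) :
    phaseInt X t s = (starRingEnd ℂ) (phaseInt X s t) := by
  unfold phaseInt
  rw [map_mul, Complex.conj_ofReal, ← integral_conj]
  congr 1
  have h : ∀ x : ℝ, Complex.exp (Complex.I * ((t:ℂ)-(s:ℂ)) * (x:ℂ))
      = (starRingEnd ℂ) (Complex.exp (Complex.I * ((s:ℂ)-(t:ℂ)) * (x:ℂ))) := by
    intro x
    rw [← Complex.exp_conj]
    congr 1
    simp only [map_mul, map_sub, Complex.conj_I, Complex.conj_ofReal, Complex.conj_natCast]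
    ring
  simp_rw [h]

lemma upper2 {H : Type*} [NormedAddCommGroup H] [InnerProductSpace ℂ H]
    (x y φ : H) (hxx : (inner ℂ x x : ℂ) = 1) (hyy : (inner ℂ y y : ℂ) = 1)
    (hxy : (inner ℂ x y : ℂ) = 0) (hyx : (inner ℂ y x : ℂ) = 0)
    (hB : (‖(inner ℂ x φ : ℂ)‖)^2 + (‖(inner ℂ y φ : ℂ)‖)^2 ≤ ‖φ‖^2)
    (a : ℝ) (ha : 0 ≤ a) (c : ℂ) :
    ‖(a:ℂ) • φ + c • ((inner ℂ y φ : ℂ) • x) + ((starRingEnd ℂ) c) • ((inner ℂ x φ : ℂ) • y)‖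
      ≤ (a + ‖c‖) * ‖φ‖ := by
  have key : ‖(a:ℂ) • φ + c • ((inner ℂ y φ : ℂ) • x) + ((starRingEnd ℂ) c) • ((inner ℂ x φ : ℂ) • y)‖^2
      = a^2*‖φ‖^2
        + (‖c‖)^2 * ((‖(inner ℂ x φ : ℂ)‖)^2 + (‖(inner ℂ y φ : ℂ)‖)^2)
        + 4*a*(c * (inner ℂ y φ : ℂ) * (starRingEnd ℂ) (inner ℂ x φ : ℂ)).re := by
    rw [← inner_self_eq_norm_sq (𝕜 := ℂ)]
    have hps : (inner ℂ φ x : ℂ) = (starRingEnd ℂ) (inner ℂ x φ : ℂ) := by rw [← inner_conj_symm]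
    have hpt : (inner ℂ φ y : ℂ) = (starRingEnd ℂ) (inner ℂ y φ : ℂ) := by rw [← inner_conj_symm]
    simp only [inner_add_left, inner_add_right, inner_smul_left, inner_smul_right,
      hxx, hyy, hxy, hyx, hps, hpt]
    have hre : (inner ℂ φ φ : ℂ).re = ‖φ‖^2 := inner_self_eq_norm_sq (𝕜 := ℂ) φ
    have him : (inner ℂ φ φ : ℂ).im = 0 := inner_self_im (𝕜 := ℂ) φ
    simp only [hre, him, Complex.sq_norm, Complex.normSq_apply, Complex.add_re,
      Complex.add_im, Complex.mul_re, Complex.mul_im, Complex.conj_re, Complex.conj_im,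
      Complex.ofReal_re, Complex.ofReal_im, Complex.one_re, Complex.one_im, Complex.zero_re,
      Complex.zero_im, RCLike.re_to_complex]
    ring
  have h2 : (c * (inner ℂ y φ : ℂ) * (starRingEnd ℂ) (inner ℂ x φ : ℂ)).re
      ≤ ‖c‖ * ‖(inner ℂ y φ : ℂ)‖ * ‖(inner ℂ x φ : ℂ)‖ := by
    calc _ ≤ ‖c * (inner ℂ y φ : ℂ) * (starRingEnd ℂ) (inner ℂ x φ : ℂ)‖ :=
          Complex.re_le_norm _
      _ = _ := by rw [norm_mul, norm_mul, Complex.norm_conj]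
  have h3 : 2 * (‖(inner ℂ y φ : ℂ)‖ * ‖(inner ℂ x φ : ℂ)‖)
      ≤ (‖(inner ℂ x φ : ℂ)‖)^2 + (‖(inner ℂ y φ : ℂ)‖)^2 := by
    nlinarith [sq_nonneg (‖(inner ℂ y φ : ℂ)‖ - ‖(inner ℂ x φ : ℂ)‖)]
  have hsq : ‖(a:ℂ) • φ + c • ((inner ℂ y φ : ℂ) • x) + ((starRingEnd ℂ) c) • ((inner ℂ x φ : ℂ) • y)‖^2
      ≤ ((a + ‖c‖) * ‖φ‖)^2 := by
    rw [key]
    have habs : (0:ℝ) ≤ ‖c‖ := norm_nonneg c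
    nlinarith [hB, h2, h3, habs, ha, norm_nonneg φ, sq_nonneg (‖φ‖), mul_nonneg ha habs]
  have h4 : (0:ℝ) ≤ (a + ‖c‖) * ‖φ‖ :=
    mul_nonneg (by positivity) (norm_nonneg _)
  nlinarith [norm_nonneg ((a:ℂ) • φ + c • ((inner ℂ y φ : ℂ) • x)
    + ((starRingEnd ℂ) c) • ((inner ℂ x φ : ℂ) • y)), hsq, h4]

/-- The elementary phase `E_el` with parameter `|w| < 1` and distinct indices `s ≠ t` satisfies
`‖E_el(X)‖ = ℓ(X)/(2π) + |w|·|(1/2π)∫_X e^{i(s-t)x} dx|`, and `‖E_el(X)‖ < 1` whenever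
`E_el(X) ≠ I`. -/
theorem stmt16 {H : Type*} [NormedAddCommGroup H] [InnerProductSpace ℂ H] [CompleteSpace H]
    (e : HilbertBasis ℕ ℂ H) (s t : ℕ) (hst : s ≠ t)
    (w : ℂ) (hw : ‖w‖ < 1)
    (E : Set ℝ → (H →L[ℂ] H))
    (hE : ∀ X : Set ℝ, MeasurableSet X → X ⊆ Set.Ico 0 (2 * Real.pi) → ∀ φ : H,
      E X φ = (((volume X).toReal / (2 * Real.pi) : ℝ) : ℂ) • φ
        + (w * phaseInt X s t) • ((inner ℂ (e t) φ : ℂ) • (e s : H))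
        + ((starRingEnd ℂ) w * phaseInt X t s) • ((inner ℂ (e s) φ : ℂ) • (e t : H))) :
    ∀ X : Set ℝ, MeasurableSet X → X ⊆ Set.Ico 0 (2 * Real.pi) →
      ‖E X‖ = (volume X).toReal / (2 * Real.pi) + ‖w‖ * ‖phaseInt X s t‖
      ∧ (E X ≠ 1 → ‖E X‖ < 1) := by
  intro X hXm hXsub
  have hπ : (0:ℝ) < 2 * Real.pi := by positivity
  have hite : ∀ i j : ℕ, (inner ℂ (e i : H) (e j : H) : ℂ) = if i = j then 1 else 0 :=
    orthonormal_iff_ite.mp e.orthonormal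
  set a : ℝ := (volume X).toReal / (2 * Real.pi) with ha_def
  set p : ℂ := phaseInt X s t with hp_def
  set c : ℂ := w * p with hc_def
  have ha0 : 0 ≤ a := by
    apply div_nonneg ENNReal.toReal_nonneg hπ.le
  have hfin : volume X < ⊤ :=
    lt_of_le_of_lt (measure_mono hXsub) (by rw [Real.volume_Ico]; exact ENNReal.ofReal_lt_top)
  have hXle : (volume X).toReal ≤ 2 * Real.pi := by
    have h1 : volume X ≤ volume (Set.Ico (0:ℝ) (2*Real.pi)) := measure_mono hXsub
    have h2 : (volume (Set.Ico (0:ℝ) (2*Real.pi))).toReal = 2 * Real.pi := by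
      rw [Real.volume_Ico, sub_zero, ENNReal.toReal_ofReal (by positivity)]
    calc (volume X).toReal ≤ (volume (Set.Ico (0:ℝ) (2*Real.pi))).toReal :=
          ENNReal.toReal_mono (by rw [Real.volume_Ico]; exact ENNReal.ofReal_ne_top) h1
      _ = 2 * Real.pi := h2
  have ha1 : a ≤ 1 := by
    rw [ha_def, div_le_one hπ]; exact hXle
  -- bound |p| ≤ a
  have habs_p1 : ‖p‖ ≤ a := by
    rw [hp_def]
    unfold phaseInt
    rw [norm_mul, Complex.norm_real, Real.norm_eq_abs]
    have hb : ‖∫ x in X, Complex.exp (Complex.I * ((s:ℂ)-(t:ℂ)) * (x:ℂ))‖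
        ≤ 1 * (volume X).toReal := by
      apply norm_setIntegral_le_of_norm_le_const hfin (fun x _ => (norm_f s t x).le)
    have h1 : |1 / (2*Real.pi)| = 1/(2*Real.pi) := abs_of_pos (by positivity)
    rw [h1, ha_def]
    calc 1/(2*Real.pi) * ‖∫ x in X, Complex.exp (Complex.I * ((s:ℂ)-(t:ℂ)) * (x:ℂ))‖
        ≤ 1/(2*Real.pi) * (1 * (volume X).toReal) := by
          apply mul_le_mul_of_nonneg_left hb (by positivity)
      _ = (volume X).toReal / (2*Real.pi) := by ring
  -- bound |p| ≤ 1 - a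
  have habs_p2 : ‖p‖ ≤ 1 - a := by
    have hdm : MeasurableSet (Set.Ico (0:ℝ) (2*Real.pi) \ X) := measurableSet_Ico.diff hXm
    have hsubd : volume (Set.Ico (0:ℝ) (2*Real.pi) \ X) ≤ volume (Set.Ico (0:ℝ) (2*Real.pi)) :=
      measure_mono Set.diff_subset
    have hfind : volume (Set.Ico (0:ℝ) (2*Real.pi) \ X) < ⊤ :=
      lt_of_le_of_lt hsubd (by rw [Real.volume_Ico]; exact ENNReal.ofReal_lt_top)
    have hsplit : (0:ℂ) = (∫ x in X, Complex.exp (Complex.I * ((s:ℂ)-(t:ℂ)) * (x:ℂ)))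
        + ∫ x in Set.Ico (0:ℝ) (2*Real.pi) \ X, Complex.exp (Complex.I * ((s:ℂ)-(t:ℂ)) * (x:ℂ)) := by
      have hu : Set.Ico (0:ℝ) (2*Real.pi) = X ∪ (Set.Ico (0:ℝ) (2*Real.pi) \ X) :=
        (Set.union_diff_cancel hXsub).symm
      rw [← setIntegral_union disjoint_sdiff_self_right hdm (int_f s t X hfin)
        (int_f s t _ hfind), ← hu]
      exact (full_int s t hst).symm
    have heq : (∫ x in X, Complex.exp (Complex.I * ((s:ℂ)-(t:ℂ)) * (x:ℂ)))
        = - ∫ x in Set.Ico (0:ℝ) (2*Real.pi) \ X, Complex.exp (Complex.I * ((s:ℂ)-(t:ℂ)) * (x:ℂ)) := by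
      linear_combination -hsplit
    have volIco : volume (Set.Ico (0:ℝ) (2*Real.pi)) = ENNReal.ofReal (2*Real.pi) := by
      rw [Real.volume_Ico]; norm_num
    have hvol : (volume (Set.Ico (0:ℝ) (2*Real.pi) \ X)).toReal = 2*Real.pi - (volume X).toReal := by
      rw [measure_diff hXsub hXm.nullMeasurableSet hfin.ne, volIco,
        ENNReal.toReal_sub_of_le (by rw [← volIco]; exact measure_mono hXsub) ENNReal.ofReal_ne_top,
        ENNReal.toReal_ofReal (by positivity)]
    have hb : ‖∫ x in Set.Ico (0:ℝ) (2*Real.pi) \ X, Complex.exp (Complex.I * ((s:ℂ)-(t:ℂ)) * (x:ℂ))‖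
        ≤ 1 * (volume (Set.Ico (0:ℝ) (2*Real.pi) \ X)).toReal := by
      apply norm_setIntegral_le_of_norm_le_const hfind (fun x _ => (norm_f s t x).le)
    rw [hp_def]
    unfold phaseInt
    rw [norm_mul, Complex.norm_real, Real.norm_eq_abs, heq, norm_neg]
    rw [hvol, one_mul] at hb
    have h1 : |1 / (2*Real.pi)| = 1/(2*Real.pi) := abs_of_pos (by positivity)
    rw [h1, ha_def]
    calc 1/(2*Real.pi) * ‖∫ x in Set.Ico (0:ℝ) (2*Real.pi) \ X,
          Complex.exp (Complex.I * ((s:ℂ)-(t:ℂ)) * (x:ℂ))‖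
        ≤ 1/(2*Real.pi) * (2*Real.pi - (volume X).toReal) := by
          apply mul_le_mul_of_nonneg_left hb (by positivity)
      _ = 1 - (volume X).toReal / (2*Real.pi) := by field_simp
  -- rewrite E X in terms of c
  have hconjc : (starRingEnd ℂ) w * phaseInt X t s = (starRingEnd ℂ) c := by
    rw [hc_def, map_mul, phaseInt_conj, hp_def]
  have hEφ : ∀ φ : H, E X φ = (a:ℂ) • φ + c • ((inner ℂ (e t : H) φ : ℂ) • (e s : H))
      + ((starRingEnd ℂ) c) • ((inner ℂ (e s : H) φ : ℂ) • (e t : H)) := by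
    intro φ
    rw [hE X hXm hXsub φ, hconjc]
  -- computation of operator norm
  have hxx : (inner ℂ (e s : H) (e s : H) : ℂ) = 1 := by rw [hite]; simp
  have hyy : (inner ℂ (e t : H) (e t : H) : ℂ) = 1 := by rw [hite]; simp
  have hxy : (inner ℂ (e s : H) (e t : H) : ℂ) = 0 := by rw [hite]; simp [hst]
  have hyx : (inner ℂ (e t : H) (e s : H) : ℂ) = 0 := by rw [hite]; simp [Ne.symm hst]
  have hupper : ‖E X‖ ≤ a + ‖c‖ := by
    apply ContinuousLinearMap.opNorm_le_bound _ (by positivity)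
    intro φ
    rw [hEφ φ]
    apply upper2 _ _ _ hxx hyy hxy hyx _ a ha0 c
    have hsum := e.orthonormal.sum_inner_products_le (s := ({s, t} : Finset ℕ)) φ
    rw [Finset.sum_pair hst] at hsum
    simpa using hsum
  -- eigenvector
  set ζ : ℂ := if c = 0 then 1 else (starRingEnd ℂ) c / ((‖c‖ : ℝ) : ℂ) with hζ_def
  have hcζ : c * ζ = ((‖c‖ : ℝ) : ℂ) := by
    by_cases hc : c = 0
    · simp [hζ_def, hc]
    · have habs : ‖c‖ ≠ 0 := norm_ne_zero_iff.mpr hc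
      have habsC : ((‖c‖ : ℝ) : ℂ) ≠ 0 := by exact_mod_cast habs
      rw [hζ_def, if_neg hc]
      rw [mul_div_assoc', Complex.mul_conj]
      rw [div_eq_iff habsC]
      norm_cast
      rw [← Complex.sq_norm]
      ring
  have hconj_eq : (starRingEnd ℂ) c = ((‖c‖ : ℝ) : ℂ) * ζ := by
    by_cases hc : c = 0
    · simp [hζ_def, hc]
    · have habs : ‖c‖ ≠ 0 := norm_ne_zero_iff.mpr hc
      have habsC : ((‖c‖ : ℝ) : ℂ) ≠ 0 := by exact_mod_cast habs
      rw [hζ_def, if_neg hc, mul_div_assoc']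
      rw [eq_div_iff habsC]
      ring
  set φ₀ : H := (e s : H) + ζ • (e t : H) with hφ₀_def
  have hinner_s : (inner ℂ (e s : H) φ₀ : ℂ) = 1 := by
    rw [hφ₀_def, inner_add_right, inner_smul_right, hxx, hxy]; ring
  have hinner_t : (inner ℂ (e t : H) φ₀ : ℂ) = ζ := by
    rw [hφ₀_def, inner_add_right, inner_smul_right, hyy, hyx]; ring
  have heig : E X φ₀ = (((a + ‖c‖ : ℝ)) : ℂ) • φ₀ := by
    rw [hEφ φ₀, hinner_s, hinner_t, hφ₀_def]
    rw [smul_smul, smul_smul, hcζ, hconj_eq]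
    push_cast
    simp only [smul_add, smul_smul, one_mul]
    module
  have hφ₀_ne : φ₀ ≠ 0 := by
    intro h
    rw [h, inner_zero_right] at hinner_s
    exact one_ne_zero hinner_s.symm
  have hφ₀_pos : 0 < ‖φ₀‖ := norm_pos_iff.mpr hφ₀_ne
  have hlower : a + ‖c‖ ≤ ‖E X‖ := by
    have h1 := (E X).le_opNorm φ₀
    rw [heig, norm_smul, Complex.norm_real, Real.norm_eq_abs,
      _root_.abs_of_nonneg (by positivity)] at h1
    exact le_of_mul_le_mul_right h1 hφ₀_pos
  have hnorm : ‖E X‖ = a + ‖c‖ := le_antisymm hupper hlower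
  have habs_c : ‖c‖ = ‖w‖ * ‖p‖ := by
    rw [hc_def, norm_mul]
  constructor
  · rw [hnorm, habs_c, ha_def, hp_def]
  · intro hne
    rw [hnorm, habs_c]
    by_cases hlt : a < 1
    · by_cases hp0 : ‖p‖ = 0
      · rw [hp0]; simpa using hlt
      · have hppos : 0 < ‖p‖ := lt_of_le_of_ne (norm_nonneg p) (Ne.symm hp0)
        have h1 : ‖w‖ * ‖p‖ < ‖p‖ :=
          (mul_lt_iff_lt_one_left hppos).mpr hw
        have h2 : ‖p‖ ≤ 1 - a := habs_p2
        linarith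
    · exfalso
      have haeq : a = 1 := le_antisymm ha1 (not_lt.mp hlt)
      have hp0 : p = 0 := by
        have : ‖p‖ ≤ 0 := by rw [haeq] at habs_p2; linarith
        exact norm_eq_zero.mp (le_antisymm this (norm_nonneg p))
      apply hne
      ext φ
      rw [hEφ φ, ContinuousLinearMap.one_apply]
      rw [haeq, hc_def, hp0]
      simp
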